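/- Let G be connected with weighted Laplacian B, let M ⊆ N be a nonempty set of measured buses, and let A ⊆ N. Then there exists an unobservable attack ΔP (i.e., ΔP ≠ 0 and ΔP = B·Δθ for some Δθ with Δθ_i = 0 for all i ∈ M) satisfying ΔP_i = 0 for all i ∈ A^c if and only if the submatrix B_{A^c, M^c} has rank strictly less than |M^c|, i.e., it is column rank deficient. -/

import Mathlib

open Matrix

/-- The incidence vector `m_e ∈ ℝ^n` of the pair of vertices `(i, j)`:
`m_e(i) = 1`, `m_e(j) = -1`, `0` elsewhere. -/
def incVec {n : ℕ} (i j : Fin n) : Fin n → ℝ :=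
  fun a => if a = i then 1 else if a = j then -1 else 0

/-- The rank-one matrix `m_e m_eᵀ`, which is well defined on unordered pairs. -/
def edgeOuter {n : ℕ} : Sym2 (Fin n) → Matrix (Fin n) (Fin n) ℝ :=
  Sym2.lift ⟨fun i j => vecMulVec (incVec i j) (incVec i j), by
    intro i j
    ext a b
    simp only [vecMulVec_apply, incVec]
    split_ifs <;> simp_all⟩

/-- The weighted Laplacian `B = Σ_{e ∈ L} w_e · m_e m_eᵀ` of the graph `G`
with edge weights `w`. -/
noncomputable def lap {n : ℕ} (G : SimpleGraph (Fin n)) [DecidableRel G.Adj]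
    (w : Sym2 (Fin n) → ℝ) : Matrix (Fin n) (Fin n) ℝ :=
  ∑ e ∈ G.edgeFinset, w e • edgeOuter e

/-- `ΔP` is an unobservable attack w.r.t. the Laplacian `B` and measured buses `M`:
`ΔP ≠ 0`, and `ΔP = B·Δθ` for some `Δθ` vanishing on `M`. -/
def Unobservable {n : ℕ} (B : Matrix (Fin n) (Fin n) ℝ) (M : Finset (Fin n))
    (ΔP : Fin n → ℝ) : Prop :=
  ΔP ≠ 0 ∧ ∃ Δθ : Fin n → ℝ, ΔP = B.mulVec Δθ ∧ ∀ i ∈ M, Δθ i = 0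

/-! ### Auxiliary lemmas -/

lemma aux_rank_lt_iff {m k : Type*} [Fintype m] [Fintype k] (B : Matrix m k ℝ) :
    B.rank < Fintype.card k ↔ ∃ x : k → ℝ, x ≠ 0 ∧ B.mulVec x = 0 := by
  have h := LinearMap.finrank_range_add_finrank_ker B.mulVecLin
  rw [Module.finrank_pi] at h
  rw [Matrix.rank]
  constructor
  · intro hlt
    have hker : LinearMap.ker B.mulVecLin ≠ ⊥ := by
      intro hbot
      rw [hbot, finrank_bot] at h
      omega
    obtain ⟨x, hx, hx0⟩ := Submodule.exists_mem_ne_zero_of_ne_bot hker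
    exact ⟨x, hx0, hx⟩
  · rintro ⟨x, hx0, hx⟩
    have hker : LinearMap.ker B.mulVecLin ≠ ⊥ := fun hbot =>
      hx0 (by simpa [hbot] using
        (LinearMap.mem_ker.2 (by simpa using hx) : x ∈ LinearMap.ker B.mulVecLin))
    have : 0 < Module.finrank ℝ (LinearMap.ker B.mulVecLin) := by
      rw [Module.finrank_pos_iff_exists_ne_zero]
      obtain ⟨y, hy, hy0⟩ := Submodule.exists_mem_ne_zero_of_ne_bot hker
      exact ⟨⟨y, hy⟩, by simpa using hy0⟩
    omega

lemma aux_incVec_dot {n : ℕ} (i j : Fin n) (hij : i ≠ j) (θ : Fin n → ℝ) :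
    incVec i j ⬝ᵥ θ = θ i - θ j := by
  unfold incVec dotProduct
  rw [Finset.sum_eq_add_of_mem i j (Finset.mem_univ i) (Finset.mem_univ j) hij]
  · simp only [if_pos trivial, if_neg (Ne.symm hij)]
    ring
  · intro c _ hc
    simp [hc.1, hc.2]

lemma aux_quad_edge {n : ℕ} (i j : Fin n) (hij : i ≠ j) (θ : Fin n → ℝ) :
    θ ⬝ᵥ (vecMulVec (incVec i j) (incVec i j)).mulVec θ = (θ i - θ j) ^ 2 := by
  have h : (vecMulVec (incVec i j) (incVec i j)).mulVec θ
      = (incVec i j ⬝ᵥ θ) • incVec i j := by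
    ext a
    simp only [mulVec, vecMulVec_apply, dotProduct, Pi.smul_apply, smul_eq_mul]
    rw [Finset.sum_mul]
    exact Finset.sum_congr rfl fun x _ => by ring
  rw [h, dotProduct_smul, aux_incVec_dot i j hij, smul_eq_mul]
  have h2 : θ ⬝ᵥ incVec i j = θ i - θ j := by
    have := aux_incVec_dot i j hij θ
    rwa [dotProduct_comm] at this
  rw [h2]; ring

/-- The edge-wise squared difference, well defined on unordered pairs. -/
noncomputable def sq2 {n : ℕ} (θ : Fin n → ℝ) : Sym2 (Fin n) → ℝ :=
  Sym2.lift ⟨fun i j => (θ i - θ j) ^ 2, fun i j => by ring⟩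

lemma aux_sum_mulVec {n : ℕ} {ι : Type*} (s : Finset ι) (f : ι → Matrix (Fin n) (Fin n) ℝ)
    (θ : Fin n → ℝ) : (∑ e ∈ s, f e).mulVec θ = ∑ e ∈ s, (f e).mulVec θ := by
  ext a
  simp only [mulVec, dotProduct, Matrix.sum_apply, Finset.sum_apply, Finset.sum_mul]
  rw [Finset.sum_comm]

lemma aux_lap_quad {n : ℕ} (G : SimpleGraph (Fin n)) [DecidableRel G.Adj]
    (w : Sym2 (Fin n) → ℝ) (θ : Fin n → ℝ) :
    θ ⬝ᵥ (lap G w).mulVec θ = ∑ e ∈ G.edgeFinset, w e * sq2 θ e := by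
  unfold lap
  rw [aux_sum_mulVec]
  have hsum : θ ⬝ᵥ ∑ e ∈ G.edgeFinset, (w e • edgeOuter e) *ᵥ θ
      = ∑ e ∈ G.edgeFinset, θ ⬝ᵥ ((w e • edgeOuter e) *ᵥ θ) := by
    simp only [dotProduct, Finset.sum_apply, Finset.mul_sum]
    rw [Finset.sum_comm]
  rw [hsum]
  refine Finset.sum_congr rfl fun e he => ?_
  rw [SimpleGraph.mem_edgeFinset] at he
  induction e using Sym2.ind with
  | _ i j =>
    have hij : i ≠ j := (G.mem_edgeSet.mp he).ne
    rw [smul_mulVec, dotProduct_smul, smul_eq_mul]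
    congr 1
    have h1 : edgeOuter s(i, j) = vecMulVec (incVec i j) (incVec i j) := rfl
    rw [h1, aux_quad_edge i j hij]
    rfl

lemma aux_walk_const {n : ℕ} {G : SimpleGraph (Fin n)} {θ : Fin n → ℝ}
    (h : ∀ i j, G.Adj i j → θ i = θ j) {i j : Fin n} (p : G.Walk i j) : θ i = θ j := by
  induction p with
  | nil => rfl
  | cons hadj _ ih => exact (h _ _ hadj).trans ih

/-- If `B θ = 0` for the weighted Laplacian of a connected graph with positive
weights, then `θ` is constant. -/
lemma aux_lap_ker_const {n : ℕ} (G : SimpleGraph (Fin n)) [DecidableRel G.Adj]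
    (hG : G.Connected) (w : Sym2 (Fin n) → ℝ) (hw : ∀ e ∈ G.edgeSet, 0 < w e)
    (θ : Fin n → ℝ) (h0 : (lap G w).mulVec θ = 0) (i j : Fin n) : θ i = θ j := by
  have hq : ∑ e ∈ G.edgeFinset, w e * sq2 θ e = 0 := by
    rw [← aux_lap_quad, h0, dotProduct_zero]
  have hnn : ∀ e ∈ G.edgeFinset, 0 ≤ w e * sq2 θ e := by
    intro e he
    rw [SimpleGraph.mem_edgeFinset] at he
    refine mul_nonneg (hw e he).le ?_
    induction e using Sym2.ind with
    | _ a b => exact sq_nonneg _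
  have hz := (Finset.sum_eq_zero_iff_of_nonneg hnn).mp hq
  have hadj : ∀ a b, G.Adj a b → θ a = θ b := by
    intro a b hab
    have he : s(a, b) ∈ G.edgeFinset := SimpleGraph.mem_edgeFinset.mpr hab
    have := hz _ he
    have hwpos := hw _ (SimpleGraph.mem_edgeFinset.mp he)
    have hsq : sq2 θ s(a, b) = 0 := by
      rcases mul_eq_zero.mp this with h | h
      · exact absurd h hwpos.ne'
      · exact h
    have : (θ a - θ b) ^ 2 = 0 := hsq
    have := pow_eq_zero_iff (n := 2) (by norm_num) |>.mp this
    linarith [sub_eq_zero.mp this]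
  obtain ⟨p⟩ := hG.preconnected i j
  exact aux_walk_const hadj p

lemma aux_mulVec_restrict {n : ℕ} (B : Matrix (Fin n) (Fin n) ℝ) (S : Finset (Fin n))
    (θ : Fin n → ℝ) (hθ : ∀ j ∉ S, θ j = 0) (i : Fin n) :
    B.mulVec θ i = ∑ j : S, B i (j : Fin n) * θ (j : Fin n) := by
  rw [Finset.sum_coe_sort S (fun j => B i j * θ j)]
  unfold mulVec dotProduct
  symm
  apply Finset.sum_subset (Finset.subset_univ S)
  intro j _ hj
  rw [hθ j hj, mul_zero]

/-- There exists an unobservable attack `ΔP` vanishing on `Aᶜ`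
iff the submatrix `B_{Aᶜ, Mᶜ}` of the weighted Laplacian is column rank deficient,
i.e. has rank strictly less than `|Mᶜ|`. -/
theorem unobservable_attack_exists_iff_rank_deficient {n : ℕ} (hn : 2 ≤ n)
    (G : SimpleGraph (Fin n)) [DecidableRel G.Adj] (hG : G.Connected)
    (w : Sym2 (Fin n) → ℝ) (hw : ∀ e ∈ G.edgeSet, 0 < w e)
    (M A : Finset (Fin n)) (hM : M.Nonempty) :
    (∃ ΔP : Fin n → ℝ, Unobservable (lap G w) M ΔP ∧ ∀ i ∈ Aᶜ, ΔP i = 0) ↔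
      ((lap G w).submatrix (fun i : (Aᶜ : Finset (Fin n)) => (i : Fin n))
          (fun j : (Mᶜ : Finset (Fin n)) => (j : Fin n))).rank < (Mᶜ).card := by
  set B := lap G w with hB
  rw [show (Mᶜ : Finset (Fin n)).card = Fintype.card (Mᶜ : Finset (Fin n)) from
    (Fintype.card_coe _).symm]
  rw [aux_rank_lt_iff]
  constructor
  · rintro ⟨ΔP, ⟨hP0, Δθ, hPB, hθM⟩, hPA⟩
    have hθ0 : ∀ j ∉ (Mᶜ : Finset (Fin n)), Δθ j = 0 := by
      intro j hj
      exact hθM j (by simpa using hj)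
    refine ⟨fun j => Δθ (j : Fin n), ?_, ?_⟩
    · intro hx
      apply hP0
      have hΔθ : Δθ = 0 := by
        funext j
        by_cases hj : j ∈ (Mᶜ : Finset (Fin n))
        · exact congrFun hx ⟨j, hj⟩
        · exact hθ0 j hj
      rw [hPB, hΔθ, mulVec_zero]
    · funext i
      have hi : ΔP (i : Fin n) = 0 := hPA i (i.2)
      rw [hPB] at hi
      have := aux_mulVec_restrict B Mᶜ Δθ hθ0 (i : Fin n)
      rw [this] at hi
      simpa [mulVec, dotProduct, submatrix_apply] using hi
  · rintro ⟨x, hx0, hx⟩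
    set Δθ : Fin n → ℝ := fun j => if h : j ∈ (Mᶜ : Finset (Fin n)) then x ⟨j, h⟩ else 0
      with hΔθdef
    have hθM : ∀ i ∈ M, Δθ i = 0 := by
      intro i hi
      simp only [hΔθdef]
      rw [dif_neg (by simpa using hi)]
    have hθ0 : ∀ j ∉ (Mᶜ : Finset (Fin n)), Δθ j = 0 := by
      intro j hj
      simp only [hΔθdef]
      rw [dif_neg hj]
    have hθne : Δθ ≠ 0 := by
      intro h
      apply hx0
      funext j
      have : Δθ (j : Fin n) = 0 := congrFun h _
      simpa only [hΔθdef, dif_pos j.2, Pi.zero_apply, Subtype.coe_eta] using this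
    refine ⟨B.mulVec Δθ, ⟨?_, Δθ, rfl, hθM⟩, ?_⟩
    · intro h0
      apply hθne
      obtain ⟨m, hm⟩ := hM
      funext j
      have := aux_lap_ker_const G hG w hw Δθ (by rw [← hB]; exact h0) j m
      rw [this, hθM m hm]; rfl
    · intro i hi
      have := aux_mulVec_restrict B Mᶜ Δθ hθ0 i
      rw [this]
      have hxi := congrFun hx ⟨i, hi⟩
      simp only [mulVec, dotProduct, submatrix_apply, Pi.zero_apply] at hxi
      rw [← hxi]
      refine Finset.sum_congr rfl fun j _ => ?_
      congr 1
      simp only [hΔθdef, dif_pos j.2]
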